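/- For every nonzero $x\in\mathbb{R}$ and every $s>0$, the Laplace transform in time of the spatial derivative of the heat kernel satisfies $\int_0^\infty e^{-st}\,\partial_x p(t,x)\,dt=-\,\mathrm{sgn}(x)\,e^{-|x|\sqrt{2s}}$, where $\partial_x p(t,x)=-\frac{x}{t}\,p(t,x)$. -/

import Mathlib

open MeasureTheory

noncomputable section

/-- The Gaussian heat kernel `p(t,x) = (2πt)^{-1/2} exp(-x²/(2t))`. -/
def heatKer (t x : ℝ) : ℝ :=
  (Real.sqrt (2 * Real.pi * t))⁻¹ * Real.exp (-x ^ 2 / (2 * t))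

open Real Filter Set intervalIntegral in
/-- Antiderivative-of-Gaussian helper. -/
def Phi (v : ℝ) : ℝ := ∫ r in (0:ℝ)..v, Real.exp (-r ^ 2 / 2)

lemma integrable_gauss : Integrable (fun r : ℝ => Real.exp (-r ^ 2 / 2)) := by
  have h : (fun r : ℝ => Real.exp (-r ^ 2 / 2)) = fun r : ℝ => Real.exp (-(1/2) * r ^ 2) := by
    funext r; congr 1; ring
  rw [h]
  exact integrable_exp_neg_mul_sq (by norm_num)

lemma continuous_gauss : Continuous (fun r : ℝ => Real.exp (-r ^ 2 / 2)) := by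
  fun_prop

lemma Phi_hasDerivAt (v : ℝ) : HasDerivAt Phi (Real.exp (-v ^ 2 / 2)) v :=
  intervalIntegral.integral_hasDerivAt_right
    (continuous_gauss.intervalIntegrable _ _)
    (continuous_gauss.stronglyMeasurable.stronglyMeasurableAtFilter)
    continuous_gauss.continuousAt

lemma gauss_Ioi : ∫ r in Set.Ioi (0:ℝ), Real.exp (-r ^ 2 / 2) = Real.sqrt (2 * Real.pi) / 2 := by
  have h : (fun r : ℝ => Real.exp (-r ^ 2 / 2)) = fun r : ℝ => Real.exp (-(1/2) * r ^ 2) := by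
    funext r; congr 1; ring
  rw [h, integral_gaussian_Ioi]
  rw [show Real.pi / (1/2) = 2 * Real.pi by ring]

lemma Phi_atTop : Filter.Tendsto Phi Filter.atTop (nhds (Real.sqrt (2 * Real.pi) / 2)) := by
  rw [← gauss_Ioi]
  exact intervalIntegral_tendsto_integral_Ioi 0 integrable_gauss.integrableOn Filter.tendsto_id

lemma gauss_Iic : ∫ r in Set.Iic (0:ℝ), Real.exp (-r ^ 2 / 2) = Real.sqrt (2 * Real.pi) / 2 := by
  have h := integral_comp_neg_Ioi (0:ℝ) (fun r => Real.exp (-r ^ 2 / 2))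
  simp only [neg_zero, neg_sq] at h
  rw [← h, gauss_Ioi]

lemma Phi_atBot : Filter.Tendsto Phi Filter.atBot (nhds (-(Real.sqrt (2 * Real.pi) / 2))) := by
  have h : Phi = fun v => -∫ r in v..(0:ℝ), Real.exp (-r ^ 2 / 2) := by
    funext v
    rw [Phi, intervalIntegral.integral_symm]
  rw [h, ← gauss_Iic]
  exact (intervalIntegral_tendsto_integral_Iic 0 integrable_gauss.integrableOn
    Filter.tendsto_id).neg

lemma sqrt_tendsto_atTop : Filter.Tendsto Real.sqrt Filter.atTop Filter.atTop :=
  Filter.tendsto_atTop_atTop_of_monotone (fun _ _ h => Real.sqrt_le_sqrt h)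
    (fun b => ⟨b ^ 2, by rw [Real.sqrt_sq_eq_abs]; exact le_abs_self b⟩)

theorem key_integral (a b : ℝ) (ha : 0 < a) (hb : 0 < b) :
    ∫ t in Set.Ioi (0:ℝ), a / (t * Real.sqrt t) * Real.exp (-(a^2/(2*t) + b^2*t/2))
      = Real.sqrt (2 * Real.pi) * Real.exp (-(a*b)) := by
  set C : ℝ := Real.sqrt (2 * Real.pi) / 2 with hC
  set u : ℝ → ℝ := fun t => b * Real.sqrt t - a * (Real.sqrt t)⁻¹ with hu
  set w : ℝ → ℝ := fun t => -(b * Real.sqrt t + a * (Real.sqrt t)⁻¹) with hw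
  set g : ℝ → ℝ := fun t => if t ≤ 0 then -C * (Real.exp (-(a*b)) + Real.exp (a*b))
    else Real.exp (-(a*b)) * Phi (u t) + Real.exp (a*b) * Phi (w t) with hgdef
  have hgpos : ∀ t : ℝ, 0 < t →
      g t = Real.exp (-(a*b)) * Phi (u t) + Real.exp (a*b) * Phi (w t) := by
    intro t ht; simp [hgdef, not_le.2 ht]
  -- derivative on Ioi 0
  have hderiv : ∀ t ∈ Set.Ioi (0:ℝ), HasDerivAt g
      (a / (t * Real.sqrt t) * Real.exp (-(a^2/(2*t) + b^2*t/2))) t := by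
    intro t ht
    have ht' : (0:ℝ) < t := ht
    have hst : 0 < Real.sqrt t := Real.sqrt_pos.2 ht'
    have h1 : HasDerivAt Real.sqrt (1/(2*Real.sqrt t)) t := Real.hasDerivAt_sqrt ht'.ne'
    have hinv : HasDerivAt (fun y => (Real.sqrt y)⁻¹)
        (-(1/(2*Real.sqrt t)) / (Real.sqrt t) ^ 2) t := h1.inv hst.ne'
    have hud : HasDerivAt u
        (b * (1/(2*Real.sqrt t)) - a * (-(1/(2*Real.sqrt t)) / (Real.sqrt t) ^ 2)) t :=
      (h1.const_mul b).sub (hinv.const_mul a)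
    have hwd : HasDerivAt w
        (-(b * (1/(2*Real.sqrt t)) + a * (-(1/(2*Real.sqrt t)) / (Real.sqrt t) ^ 2))) t :=
      ((h1.const_mul b).add (hinv.const_mul a)).neg
    have hPu := ((Phi_hasDerivAt (u t)).comp t hud).const_mul (Real.exp (-(a*b)))
    have hPw := ((Phi_hasDerivAt (w t)).comp t hwd).const_mul (Real.exp (a*b))
    have hsum := hPu.add hPw
    have heq : g =ᶠ[nhds t]
        (fun y => Real.exp (-(a*b)) * (Phi ∘ u) y + Real.exp (a*b) * (Phi ∘ w) y) := by
      filter_upwards [Ioi_mem_nhds ht'] with y hy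
      simp [hgpos y hy, Function.comp]
    refine HasDerivAt.congr_of_eventuallyEq ?_ heq
    refine hsum.congr_deriv ?_
    symm
    -- algebra
    set s0 : ℝ := Real.sqrt t with hs0
    have hs2 : s0 ^ 2 = t := Real.sq_sqrt ht'.le
    have E1 : Real.exp (-(a*b)) * Real.exp (-(u t) ^ 2 / 2)
        = Real.exp (-(a^2/(2*t) + b^2*t/2)) := by
      rw [← Real.exp_add]; congr 1
      rw [hu, ← hs2]
      simp only [Real.sqrt_sq hst.le]
      field_simp
      ring
    have E2 : Real.exp (a*b) * Real.exp (-(w t) ^ 2 / 2)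
        = Real.exp (-(a^2/(2*t) + b^2*t/2)) := by
      rw [← Real.exp_add]; congr 1
      rw [hw, ← hs2]
      simp only [Real.sqrt_sq hst.le]
      field_simp
      ring
    calc a / (t * Real.sqrt t) * Real.exp (-(a^2/(2*t) + b^2*t/2))
        = (Real.exp (-(a*b)) * Real.exp (-(u t) ^ 2 / 2)) *
            (b * (1/(2*s0)) - a * (-(1/(2*s0)) / s0 ^ 2))
          + (Real.exp (a*b) * Real.exp (-(w t) ^ 2 / 2)) *
            (-(b * (1/(2*s0)) + a * (-(1/(2*s0)) / s0 ^ 2))) := by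
          rw [E1, E2, ← hs2]
          have : (0:ℝ) < s0 := hst
          simp only [Real.sqrt_sq this.le]
          field_simp
          ring
      _ = _ := by ring
  -- continuity at 0 from the right
  have hg0 : g 0 = -C * (Real.exp (-(a*b)) + Real.exp (a*b)) := by simp [hgdef]
  have hcont : ContinuousWithinAt g (Set.Ici 0) 0 := by
    rw [← continuousWithinAt_Ioi_iff_Ici]
    rw [ContinuousWithinAt, hg0]
    have hsq : Filter.Tendsto Real.sqrt (nhdsWithin 0 (Set.Ioi 0)) (nhdsWithin 0 (Set.Ioi 0)) := by
      apply tendsto_nhdsWithin_of_tendsto_nhds_of_eventually_within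
      · have h0 := Real.continuous_sqrt.tendsto 0
        rw [Real.sqrt_zero] at h0
        exact h0.mono_left nhdsWithin_le_nhds
      · filter_upwards [self_mem_nhdsWithin] with t ht
        exact Real.sqrt_pos.2 ht
    have hainv : Filter.Tendsto (fun t => a * (Real.sqrt t)⁻¹) (nhdsWithin 0 (Set.Ioi 0))
        Filter.atTop := by
      have h2 : Filter.Tendsto (fun t => (Real.sqrt t)⁻¹) (nhdsWithin 0 (Set.Ioi 0))
          Filter.atTop := hsq.inv_tendsto_nhdsGT_zero
      exact h2.const_mul_atTop ha
    have hbs : Filter.Tendsto (fun t => b * Real.sqrt t) (nhdsWithin 0 (Set.Ioi 0))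
        (nhds 0) := by
      have h3 : Filter.Tendsto Real.sqrt (nhdsWithin 0 (Set.Ioi 0)) (nhds 0) :=
        hsq.mono_right nhdsWithin_le_nhds
      simpa using h3.const_mul b
    have hut : Filter.Tendsto u (nhdsWithin 0 (Set.Ioi 0)) Filter.atBot := by
      rw [hu]
      simp only [sub_eq_add_neg]
      exact hbs.add_atBot (Filter.tendsto_neg_atTop_atBot.comp hainv)
    have hwt : Filter.Tendsto w (nhdsWithin 0 (Set.Ioi 0)) Filter.atBot := by
      rw [hw]
      exact Filter.tendsto_neg_atTop_atBot.comp (hbs.add_atTop hainv)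
    have hlim := ((Phi_atBot.comp hut).const_mul (Real.exp (-(a*b)))).add
      ((Phi_atBot.comp hwt).const_mul (Real.exp (a*b)))
    have hval : Real.exp (-(a*b)) * -(Real.sqrt (2*Real.pi)/2)
        + Real.exp (a*b) * -(Real.sqrt (2*Real.pi)/2)
        = -C * (Real.exp (-(a*b)) + Real.exp (a*b)) := by rw [hC]; ring
    rw [← hval]
    refine Filter.Tendsto.congr' ?_ hlim
    filter_upwards [self_mem_nhdsWithin] with t ht
    simp [hgpos t ht, Function.comp]
  -- limit at infinity
  have htop : Filter.Tendsto g Filter.atTop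
      (nhds (Real.exp (-(a*b)) * C + Real.exp (a*b) * -C)) := by
    have hainv : Filter.Tendsto (fun t => a * (Real.sqrt t)⁻¹) Filter.atTop (nhds 0) := by
      simpa using (sqrt_tendsto_atTop.inv_tendsto_atTop).const_mul a
    have hbs : Filter.Tendsto (fun t => b * Real.sqrt t) Filter.atTop Filter.atTop :=
      sqrt_tendsto_atTop.const_mul_atTop hb
    have hut : Filter.Tendsto u Filter.atTop Filter.atTop := by
      rw [hu]
      simp only [sub_eq_add_neg]
      exact hbs.atTop_add hainv.neg
    have hwt : Filter.Tendsto w Filter.atTop Filter.atBot := by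
      rw [hw]
      exact Filter.tendsto_neg_atTop_atBot.comp (hbs.atTop_add hainv)
    have hlim := ((Phi_atTop.comp hut).const_mul (Real.exp (-(a*b)))).add
      ((Phi_atBot.comp hwt).const_mul (Real.exp (a*b)))
    refine Filter.Tendsto.congr' ?_ hlim
    filter_upwards [Filter.Ioi_mem_atTop 0] with t ht
    simp [hgpos t ht, Function.comp]
  have hpos : ∀ t ∈ Set.Ioi (0:ℝ),
      0 ≤ a / (t * Real.sqrt t) * Real.exp (-(a^2/(2*t) + b^2*t/2)) := by
    intro t ht
    have ht' : (0:ℝ) < t := ht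
    have : 0 < Real.sqrt t := Real.sqrt_pos.2 ht'
    positivity
  have H := integral_Ioi_of_hasDerivAt_of_nonneg hcont hderiv hpos htop
  rw [H, hg0, hC]
  ring


lemma heatKer_hasDerivAt (t : ℝ) (ht : 0 < t) (y : ℝ) :
    HasDerivAt (fun y => heatKer t y) (-(y/t) * heatKer t y) y := by
  have h1 : HasDerivAt (fun y : ℝ => -y ^ 2 / (2*t)) (-(2*y) / (2*t)) y := by
    have h := ((hasDerivAt_pow 2 y).neg).div_const (2*t)
    refine h.congr_deriv ?_
    norm_num
  have h2 := h1.exp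
  have h3 := h2.const_mul ((Real.sqrt (2 * Real.pi * t))⁻¹)
  have h4 : (fun y => heatKer t y) = fun y =>
      (Real.sqrt (2 * Real.pi * t))⁻¹ * Real.exp (-y ^ 2 / (2*t)) := rfl
  rw [h4]
  refine h3.congr_deriv ?_
  rw [heatKer]
  field_simp [ht.ne']

/-- Laplace transform (in time) of the spatial derivative of the heat kernel,
where `∂ₓ p(t,x) = -(x/t) p(t,x)`. -/
theorem laplace_transform_heat_kernel_deriv (x : ℝ) (hx : x ≠ 0) (s : ℝ) (hs : 0 < s) :
    (∀ t : ℝ, 0 < t → deriv (fun y => heatKer t y) x = -(x / t) * heatKer t x) ∧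
    ∫ t in Set.Ioi (0:ℝ), Real.exp (-s * t) * deriv (fun y => heatKer t y) x =
      -Real.sign x * Real.exp (-|x| * Real.sqrt (2 * s)) := by
  constructor
  · intro t ht
    exact (heatKer_hasDerivAt t ht x).deriv
  · have hb : 0 < Real.sqrt (2 * s) := Real.sqrt_pos.2 (by linarith)
    have ha : 0 < |x| := abs_pos.2 hx
    have h2π : (0:ℝ) < Real.sqrt (2 * Real.pi) := Real.sqrt_pos.2 (by positivity)
    have hsign : Real.sign x * |x| = x := by
      rcases lt_or_gt_of_ne hx with h | h
      · rw [Real.sign_of_neg h, abs_of_neg h]; ring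
      · rw [Real.sign_of_pos h, abs_of_pos h, one_mul]
    have hcong : ∀ t ∈ Set.Ioi (0:ℝ),
        Real.exp (-s * t) * deriv (fun y => heatKer t y) x
        = (-Real.sign x * (Real.sqrt (2 * Real.pi))⁻¹) *
            (|x| / (t * Real.sqrt t) *
              Real.exp (-(|x|^2/(2*t) + (Real.sqrt (2*s))^2*t/2))) := by
      intro t ht
      have ht' : (0:ℝ) < t := ht
      have hst : 0 < Real.sqrt t := Real.sqrt_pos.2 ht'
      rw [(heatKer_hasDerivAt t ht' x).deriv, heatKer]
      rw [Real.sq_sqrt (by linarith : (0:ℝ) ≤ 2*s), sq_abs]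
      rw [show -(x^2/(2*t) + 2*s*t/2) = -s*t + -x^2/(2*t) by ring, Real.exp_add]
      rw [show Real.sqrt (2 * Real.pi * t) = Real.sqrt (2*Real.pi) * Real.sqrt t from
        Real.sqrt_mul (by positivity) t]
      rcases lt_or_gt_of_ne hx with h | h
      · rw [Real.sign_of_neg h, abs_of_neg h]
        field_simp
      · rw [Real.sign_of_pos h, abs_of_pos h]
        field_simp
    rw [setIntegral_congr_fun measurableSet_Ioi hcong, integral_const_mul,
      key_integral |x| (Real.sqrt (2*s)) ha hb]
    rw [show -|x| * Real.sqrt (2*s) = -(|x| * Real.sqrt (2*s)) by ring]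
    field_simp
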